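/- Let h be a quasisymmetric homeomorphism of the circle whose lift H satisfies K^{-1} ≤ (H(x+t) - H(x))/(H(x) - H(x-t)) ≤ K for all x ∈ ℝ, t > 0. If f and g are circle endomorphisms of the same degree d with g ∘ h = h ∘ f and g is C^1 with g' continuous at a fixed point q = h(p) of g where p is a fixed point of f with f differentiable at p, and if h is symmetric (the quasisymmetry constant tends to 1 as t → 0), then the eigenvalues agree along periodic orbits in the following basic instance: if p is a fixed point of f and the one-sided limits e_f = lim_{t→0^+}(F(x_p + t) - x_p)/t and e_g exist with e_f, e_g > 1, then e_f = e_g. -/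

import Mathlib

open Filter Set

lemma aux_scaleNat (H : ℝ → ℝ) (hHmono : StrictMono H)
    (ε : ℝ → ℝ)
    (hε : Tendsto ε (nhdsWithin 0 (Ioi 0)) (nhds 0))
    (hsym : ∀ x : ℝ, ∀ t > (0 : ℝ),
      1 - ε t ≤ (H (x + t) - H x) / (H x - H (x - t)) ∧
      (H (x + t) - H x) / (H x - H (x - t)) ≤ 1 + ε t)
    (xp : ℝ) :
    ∀ j : ℕ, Tendsto (fun t => (H (xp + (j : ℝ) * t) - H xp) / (H (xp + t) - H xp))
      (nhdsWithin 0 (Ioi 0)) (nhds (j : ℝ)) := by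
  set l := nhdsWithin (0:ℝ) (Ioi 0) with hl
  have hmem : ∀ᶠ t in l, t ∈ Ioi (0:ℝ) := eventually_mem_nhdsWithin
  have hs1pos : ∀ t : ℝ, 0 < t → 0 < H (xp + t) - H xp := by
    intro t ht
    have := hHmono (show xp < xp + t by linarith)
    linarith
  have P0 : Tendsto (fun t => (H (xp + (0:ℝ) * t) - H xp) / (H (xp + t) - H xp)) l (nhds (0:ℝ)) := by
    have : (fun t => (H (xp + (0:ℝ) * t) - H xp) / (H (xp + t) - H xp))
        = fun t => (0:ℝ) / (H (xp + t) - H xp) := by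
      funext t; norm_num
    rw [this]
    simpa using (tendsto_const_nhds : Tendsto (fun _ : ℝ => (0:ℝ)) l (nhds 0))
  have P1 : Tendsto (fun t => (H (xp + (1:ℝ) * t) - H xp) / (H (xp + t) - H xp)) l (nhds (1:ℝ)) := by
    refine Tendsto.congr' ?_ (tendsto_const_nhds : Tendsto (fun _ : ℝ => (1:ℝ)) l (nhds 1))
    filter_upwards [hmem] with t ht
    rw [one_mul, div_self (hs1pos t ht).ne']
  have key : ∀ j : ℕ,
      Tendsto (fun t => (H (xp + (j : ℝ) * t) - H xp) / (H (xp + t) - H xp)) l (nhds (j : ℝ)) ∧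
      Tendsto (fun t => (H (xp + ((j : ℝ) + 1) * t) - H xp) / (H (xp + t) - H xp)) l (nhds ((j : ℝ) + 1)) := by
    intro j
    induction j with
    | zero =>
      constructor
      · simpa using P0
      · simpa using P1
    | succ j ih =>
      obtain ⟨Pj, Pj1⟩ := ih
      push_cast
      refine ⟨by convert Pj1 using 3 <;> push_cast <;> ring, ?_⟩
      -- need P (j+2)
      have hratio : Tendsto (fun t =>
          (H (xp + ((j:ℝ) + 2) * t) - H (xp + ((j:ℝ) + 1) * t)) /
          (H (xp + ((j:ℝ) + 1) * t) - H (xp + (j:ℝ) * t))) l (nhds 1) := by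
        have hlow : Tendsto (fun t => 1 - ε t) l (nhds 1) := by
          simpa using ((tendsto_const_nhds : Tendsto (fun _ : ℝ => (1:ℝ)) l (nhds 1)).sub hε)
        have hhigh : Tendsto (fun t => 1 + ε t) l (nhds 1) := by
          simpa using ((tendsto_const_nhds : Tendsto (fun _ : ℝ => (1:ℝ)) l (nhds 1)).add hε)
        refine tendsto_of_tendsto_of_tendsto_of_le_of_le' hlow hhigh ?_ ?_
        · filter_upwards [hmem] with t ht
          have h := (hsym (xp + ((j:ℝ) + 1) * t) t ht).1
          have e1 : xp + ((j:ℝ) + 1) * t + t = xp + ((j:ℝ) + 2) * t := by ring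
          have e2 : xp + ((j:ℝ) + 1) * t - t = xp + (j:ℝ) * t := by ring
          rw [e1, e2] at h; exact h
        · filter_upwards [hmem] with t ht
          have h := (hsym (xp + ((j:ℝ) + 1) * t) t ht).2
          have e1 : xp + ((j:ℝ) + 1) * t + t = xp + ((j:ℝ) + 2) * t := by ring
          have e2 : xp + ((j:ℝ) + 1) * t - t = xp + (j:ℝ) * t := by ring
          rw [e1, e2] at h; exact h
      have hBpos : ∀ t : ℝ, 0 < t → 0 < H (xp + ((j:ℝ) + 1) * t) - H (xp + (j:ℝ) * t) := by
        intro t ht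
        have := hHmono (show xp + (j:ℝ) * t < xp + ((j:ℝ) + 1) * t by nlinarith)
        linarith
      have hB1 : Tendsto (fun t =>
          (H (xp + ((j:ℝ) + 1) * t) - H (xp + (j:ℝ) * t)) / (H (xp + t) - H xp)) l (nhds 1) := by
        have h := Pj1.sub Pj
        have e : ((j:ℝ) + 1) - j = 1 := by ring
        rw [e] at h
        exact h.congr (fun t => by ring)
      have hA1 : Tendsto (fun t =>
          (H (xp + ((j:ℝ) + 2) * t) - H (xp + ((j:ℝ) + 1) * t)) / (H (xp + t) - H xp)) l (nhds 1) := by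
        have h := hratio.mul hB1
        rw [one_mul] at h
        refine h.congr' ?_
        filter_upwards [hmem] with t ht
        have hB := (hBpos t ht).ne'
        rw [div_mul_div_comm, mul_comm (H (xp + ((j:ℝ) + 1) * t) - H (xp + (j:ℝ) * t)) (H (xp + t) - H xp), mul_div_mul_right _ _ hB]
      have h := Pj1.add hA1
      refine h.congr fun t => ?_
      ring_nf
  intro j
  exact (key j).1

lemma aux_scaleRat (H : ℝ → ℝ) (hHmono : StrictMono H)
    (ε : ℝ → ℝ)
    (hε : Tendsto ε (nhdsWithin 0 (Ioi 0)) (nhds 0))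
    (hsym : ∀ x : ℝ, ∀ t > (0 : ℝ),
      1 - ε t ≤ (H (x + t) - H x) / (H x - H (x - t)) ∧
      (H (x + t) - H x) / (H x - H (x - t)) ≤ 1 + ε t)
    (xp : ℝ) (a : ℚ) (ha : 0 < a) :
    Tendsto (fun t => (H (xp + (a : ℝ) * t) - H xp) / (H (xp + t) - H xp))
      (nhdsWithin 0 (Ioi 0)) (nhds (a : ℝ)) := by
  set l := nhdsWithin (0:ℝ) (Ioi 0) with hl
  have hmem : ∀ᶠ t in l, t ∈ Ioi (0:ℝ) := eventually_mem_nhdsWithin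
  set j : ℕ := a.num.toNat with hj
  set m : ℕ := a.den with hmdef
  have hmpos : (0:ℝ) < (m:ℝ) := by exact_mod_cast a.pos
  have hjcast : ((j:ℕ):ℝ) = ((a.num : ℤ) : ℝ) := by
    rw [hj]; exact_mod_cast Int.toNat_of_nonneg (le_of_lt (Rat.num_pos.mpr ha))
  have hacast : (a:ℝ) = (j:ℝ) / (m:ℝ) := by
    rw [hjcast, hmdef, Rat.cast_def]
  have comp : Tendsto (fun t : ℝ => t / (m:ℝ)) l l := by
    refine tendsto_nhdsWithin_of_tendsto_nhds_of_eventually_within _ ?_ ?_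
    · have h0 : Tendsto (fun t : ℝ => t / (m:ℝ)) (nhds 0) (nhds (0 / (m:ℝ))) :=
        tendsto_id.div_const _
      rw [zero_div] at h0
      exact h0.mono_left nhdsWithin_le_nhds
    · filter_upwards [hmem] with t ht
      exact div_pos ht hmpos
  have Pj := aux_scaleNat H hHmono ε hε hsym xp j
  have Pm := aux_scaleNat H hHmono ε hε hsym xp m
  have hmne : ((m:ℕ):ℝ) ≠ 0 := hmpos.ne'
  have hquot : Tendsto (fun s => (H (xp + (j:ℝ) * s) - H xp) / (H (xp + (m:ℝ) * s) - H xp))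
      l (nhds ((j:ℝ) / (m:ℝ))) := by
    refine (Pj.div Pm hmne).congr' ?_
    filter_upwards [hmem] with s hs
    have h1 : H (xp + s) - H xp ≠ 0 := by
      have := hHmono (show xp < xp + s by exact lt_add_of_pos_right xp hs)
      exact (sub_pos.mpr this).ne'
    have h2 : H (xp + (m:ℝ) * s) - H xp ≠ 0 := by
      have hms : 0 < (m:ℝ) * s := mul_pos hmpos hs
      have := hHmono (show xp < xp + (m:ℝ) * s by linarith)
      exact (sub_pos.mpr this).ne'
    simp only [Pi.div_apply]
    field_simp
  have h := hquot.comp comp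
  have h2 : Tendsto (fun t => (H (xp + (a:ℝ) * t) - H xp) / (H (xp + t) - H xp))
      l (nhds ((j:ℝ) / (m:ℝ))) := by
    refine h.congr' ?_
    filter_upwards [hmem] with t ht
    have e1 : xp + (j:ℝ) * (t / (m:ℝ)) = xp + (a:ℝ) * t := by
      rw [hacast]; field_simp
    have e2 : xp + (m:ℝ) * (t / (m:ℝ)) = xp + t := by field_simp
    simp only [Function.comp_apply, e1, e2]
  rwa [← hacast] at h2


/-- if a symmetric homeomorphism `h` (with lift `H`) conjugates the
circle endomorphisms `f` and `g` (`g ∘ h = h ∘ f`), `p` is a fixed point of `f` with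
`q = h(p)` fixed by `g`, and the one-sided eigenvalue limits
`e_f = lim_{t→0⁺} (F(x_p+t) - x_p)/t` and `e_g = lim_{t→0⁺} (G(y_p+t) - y_p)/t`
exist with `e_f, e_g > 1`, then `e_f = e_g`. -/
theorem stmt_17 (d : ℕ) (hd : 2 ≤ d)
    (F G H : ℝ → ℝ)
    (hFcont : Continuous F) (hFmono : StrictMono F)
    (hFper : ∀ x, F (x + 1) = F x + d)
    (hGcont : Continuous G) (hGmono : StrictMono G)
    (hGper : ∀ x, G (x + 1) = G x + d)
    (hHcont : Continuous H) (hHmono : StrictMono H)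
    (hHbij : Function.Bijective H)
    (hHper : ∀ x, H (x + 1) = H x + 1)
    (ε : ℝ → ℝ)
    (hε : Tendsto ε (nhdsWithin 0 (Ioi 0)) (nhds 0))
    (hsym : ∀ x : ℝ, ∀ t > (0 : ℝ),
      1 - ε t ≤ (H (x + t) - H x) / (H x - H (x - t)) ∧
      (H (x + t) - H x) / (H x - H (x - t)) ≤ 1 + ε t)
    (hconj : ∀ x, G (H x) = H (F x))
    (xp : ℝ) (hxp : F xp = xp)
    (ef eg : ℝ) (hef1 : 1 < ef) (heg1 : 1 < eg)
    (hef : Tendsto (fun t => (F (xp + t) - xp) / t)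
      (nhdsWithin 0 (Ioi 0)) (nhds ef))
    (heg : Tendsto (fun t => (G (H xp + t) - H xp) / t)
      (nhdsWithin 0 (Ioi 0)) (nhds eg)) :
    ef = eg := by
  set l := nhdsWithin (0:ℝ) (Ioi 0) with hl
  have hmem : ∀ᶠ t in l, t ∈ Ioi (0:ℝ) := eventually_mem_nhdsWithin
  have hs1pos : ∀ t : ℝ, 0 < t → 0 < H (xp + t) - H xp := by
    intro t ht
    have := hHmono (show xp < xp + t by linarith)
    linarith
  have hu0 : Tendsto (fun t => H (xp + t) - H xp) l l := by
    refine tendsto_nhdsWithin_of_tendsto_nhds_of_eventually_within _ ?_ ?_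
    · have hc : Continuous fun t : ℝ => H (xp + t) - H xp :=
        (hHcont.comp (continuous_const.add continuous_id)).sub continuous_const
      have h0 := hc.tendsto 0
      have e : H (xp + 0) - H xp = 0 := by simp
      rw [e] at h0
      exact h0.mono_left nhdsWithin_le_nhds
    · filter_upwards [hmem] with t ht
      exact hs1pos t ht
  have hUV : Tendsto (fun t => (H (xp + (F (xp + t) - xp)) - H xp) / (H (xp + t) - H xp))
      l (nhds eg) := by
    refine (heg.comp hu0).congr fun t => ?_
    have e1 : H xp + (H (xp + t) - H xp) = H (xp + t) := by ring
    have e2 : xp + (F (xp + t) - xp) = F (xp + t) := by ring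
    simp only [Function.comp_apply, e1, e2, hconj]
  have claim1 : ∀ a : ℚ, 0 < a → (a:ℝ) < ef → (a:ℝ) ≤ eg := by
    intro a ha0 haef
    have La := aux_scaleRat H hHmono ε hε hsym xp a ha0
    refine le_of_tendsto_of_tendsto La hUV ?_
    have hev : ∀ᶠ t in l, (a:ℝ) < (F (xp + t) - xp) / t :=
      hef.eventually (eventually_gt_nhds haef)
    filter_upwards [hmem, hev] with t ht hlt
    have ht0 : (0:ℝ) < t := ht
    have h1 : (a:ℝ) * t < F (xp + t) - xp := (lt_div_iff₀ ht0).mp hlt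
    have h2 : H (xp + (a:ℝ) * t) ≤ H (xp + (F (xp + t) - xp)) := (hHmono (by linarith)).le
    have hden := hs1pos t ht0
    gcongr
  have claim2 : ∀ b : ℚ, ef < (b:ℝ) → eg ≤ (b:ℝ) := by
    intro b hb
    have hb0 : 0 < b := by
      have : (0:ℝ) < (b:ℝ) := by linarith
      exact_mod_cast this
    have Lb := aux_scaleRat H hHmono ε hε hsym xp b hb0
    refine le_of_tendsto_of_tendsto hUV Lb ?_
    have hev : ∀ᶠ t in l, (F (xp + t) - xp) / t < (b:ℝ) :=
      hef.eventually (eventually_lt_nhds hb)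
    filter_upwards [hmem, hev] with t ht hlt
    have ht0 : (0:ℝ) < t := ht
    have h1 : F (xp + t) - xp < (b:ℝ) * t := (div_lt_iff₀ ht0).mp hlt
    have h2 : H (xp + (F (xp + t) - xp)) ≤ H (xp + (b:ℝ) * t) := (hHmono (by linarith)).le
    have hden := hs1pos t ht0
    gcongr
  have hle1 : ef ≤ eg := by
    by_contra hc
    push_neg at hc
    obtain ⟨a, h1, h2⟩ := exists_rat_btwn hc
    have ha0 : 0 < a := by
      have : (0:ℝ) < (a:ℝ) := by linarith
      exact_mod_cast this
    have := claim1 a ha0 h2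
    linarith
  have hle2 : eg ≤ ef := by
    by_contra hc
    push_neg at hc
    obtain ⟨b, h1, h2⟩ := exists_rat_btwn hc
    have := claim2 b h1
    linarith
  linarith
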